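/- arXiv:2010.12343 — 3 statements merged into one kernel-verified Lean document; each statement's English description precedes it below -/
import Mathlib

section
/- Let G be a connected d-regular graph on n vertices with diameter k. Then k ≤ 3n/(d+1). -/
open SimpleGraph Finset

private lemma dist_getVert_le_left {V : Type*} {G : SimpleGraph V} (hconn : G.Connected) :
    ∀ {u v : V} (p : G.Walk u v) (n : ℕ), G.dist u (p.getVert n) ≤ n := by
  intro u v p
  induction p with
  | nil => intro n; simp [SimpleGraph.Walk.getVert, SimpleGraph.dist_self]
  | @cons a b c h q ih =>
    intro n
    cases n with
    | zero => simp [SimpleGraph.Walk.getVert, SimpleGraph.dist_self]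
    | succ n =>
      calc G.dist a ((SimpleGraph.Walk.cons h q).getVert (n+1))
          ≤ G.dist a b + G.dist b ((SimpleGraph.Walk.cons h q).getVert (n+1)) :=
            hconn.dist_triangle
        _ ≤ 1 + n := by
            gcongr
            · simpa using SimpleGraph.dist_le (SimpleGraph.Walk.cons h SimpleGraph.Walk.nil)
            · simpa [SimpleGraph.Walk.getVert] using ih n
        _ = n + 1 := by omega

private lemma dist_getVert_le_right {V : Type*} {G : SimpleGraph V} :
    ∀ {u v : V} (p : G.Walk u v) (n : ℕ), G.dist (p.getVert n) v ≤ p.length - n := by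
  intro u v p
  induction p with
  | nil => intro n; simp [SimpleGraph.Walk.getVert, SimpleGraph.dist_self]
  | cons h q ih =>
    intro n
    cases n with
    | zero =>
      simpa [SimpleGraph.Walk.getVert] using SimpleGraph.dist_le (SimpleGraph.Walk.cons h q)
    | succ n =>
      simpa [SimpleGraph.Walk.getVert] using ih n

/-- A connected `d`-regular graph on `n` vertices has diameter `k ≤ 3n/(d+1)`. -/
theorem diam_le_of_regular {V : Type*} [Fintype V] (G : SimpleGraph V)
    [DecidableRel G.Adj] (d : ℕ) (hconn : G.Connected)
    (hreg : G.IsRegularOfDegree d) :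
    (G.diam : ℝ) ≤ 3 * (Fintype.card V) / (d + 1) := by
  classical
  have hne : Nonempty V := hconn.nonempty
  obtain ⟨u, v, huv⟩ := G.exists_dist_eq_diam
  obtain ⟨p, hp⟩ := hconn.exists_walk_length_eq_dist u v
  rw [← huv]
  set k := G.dist u v with hk
  -- distance from u to getVert n is exactly n, for n ≤ k
  have hdistu : ∀ n, n ≤ k → G.dist u (p.getVert n) = n := by
    intro n hn
    have h1 : G.dist u (p.getVert n) ≤ n := dist_getVert_le_left hconn p n
    have h2 : G.dist (p.getVert n) v ≤ k - n := by
      simpa [hp] using dist_getVert_le_right p n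
    have h3 : k ≤ G.dist u (p.getVert n) + G.dist (p.getVert n) v := hconn.dist_triangle
    omega
  have hsep : ∀ a b, a ≤ k → b ≤ k → a ≤ b → b - a ≤ G.dist (p.getVert a) (p.getVert b) := by
    intro a b ha hb hab
    have h3 : G.dist u (p.getVert b) ≤ G.dist u (p.getVert a) + G.dist (p.getVert a) (p.getVert b) :=
      hconn.dist_triangle
    rw [hdistu a ha, hdistu b hb] at h3
    omega
  set m := k / 3 + 1 with hm
  have h3i : ∀ i, i < m → 3 * i ≤ k := by intro i hi; omega
  set S : ℕ → Finset V := fun i => insert (p.getVert (3 * i)) (G.neighborFinset (p.getVert (3 * i)))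
    with hS
  have hcard : ∀ i, (S i).card = d + 1 := by
    intro i
    rw [hS]
    rw [Finset.card_insert_of_notMem (by simp), SimpleGraph.card_neighborFinset_eq_degree,
      hreg _]
  have hmem : ∀ i y, y ∈ S i → G.dist (p.getVert (3 * i)) y ≤ 1 := by
    intro i y hy
    simp only [hS, Finset.mem_insert, SimpleGraph.mem_neighborFinset] at hy
    rcases hy with rfl | hadj
    · simp [SimpleGraph.dist_self]
    · exact le_trans (SimpleGraph.dist_le (SimpleGraph.Walk.cons hadj SimpleGraph.Walk.nil)) (by simp)
  have hdisj : ∀ i ∈ Finset.range m, ∀ j ∈ Finset.range m, i ≠ j → Disjoint (S i) (S j) := by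
    intro i hi j hj hij
    rw [Finset.disjoint_left]
    intro y hyi hyj
    wlog hlt : i < j generalizing i j
    · exact this j hj i hi hij.symm hyj hyi (by omega)
    have h1 := hmem i y hyi
    have h2 := hmem j y hyj
    have h3 : G.dist (p.getVert (3 * i)) (p.getVert (3 * j)) ≤ 2 := by
      calc G.dist (p.getVert (3 * i)) (p.getVert (3 * j))
          ≤ G.dist (p.getVert (3 * i)) y + G.dist y (p.getVert (3 * j)) := hconn.dist_triangle
        _ ≤ 1 + 1 := by
            rw [SimpleGraph.dist_comm (u := y)]
            gcongr
        _ = 2 := rfl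
    have h4 := hsep (3 * i) (3 * j) (h3i i (by simpa using hi)) (h3i j (by simpa using hj))
      (by omega)
    omega
  have hbig : m * (d + 1) ≤ Fintype.card V := by
    calc m * (d + 1) = ∑ i ∈ Finset.range m, (S i).card := by
          simp [hcard, mul_comm]
      _ = ((Finset.range m).biUnion S).card := (Finset.card_biUnion hdisj).symm
      _ ≤ Fintype.card V := Finset.card_le_univ _
  have hkey : k * (d + 1) ≤ 3 * Fintype.card V := by
    have h1 : k + 1 ≤ 3 * m := by omega
    have h2 : (k + 1) * (d + 1) ≤ (3 * m) * (d + 1) := Nat.mul_le_mul_right _ h1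
    have h3 : (3 * m) * (d + 1) = 3 * (m * (d + 1)) := by ring
    have h4 : 3 * (m * (d + 1)) ≤ 3 * Fintype.card V := Nat.mul_le_mul_left _ hbig
    have h5 : k * (d + 1) ≤ (k + 1) * (d + 1) := Nat.mul_le_mul_right _ (by omega)
    omega
  rw [le_div_iff₀ (by positivity)]
  calc (k : ℝ) * (d + 1) = ((k * (d + 1) : ℕ) : ℝ) := by push_cast; ring
    _ ≤ ((3 * Fintype.card V : ℕ) : ℝ) := by exact_mod_cast hkey
    _ = 3 * Fintype.card V := by push_cast; ring
end

section
/- For any set S of vertices of the n-dimensional hypercube graph Q_n (on 2^n vertices), the number of edges of Q_n with exactly one endpoint in S is at least |S| · (n - log₂|S|). -/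
open Finset

namespace HEI

variable {n : ℕ}

def cns (a : Bool) (u : Fin n → Bool) : Fin (n+1) → Bool := Fin.cons a u

def ham (x y : Fin n → Bool) : ℕ := (Finset.univ.filter fun i => x i ≠ y i).card

lemma ham_cns (a b : Bool) (u v : Fin n → Bool) :
    ham (cns a u) (cns b v) = (if a ≠ b then 1 else 0) + ham u v := by
  unfold ham
  rw [Finset.card_filter, Finset.card_filter, Fin.sum_univ_succ]
  simp [cns]

lemma ham_eq_zero_iff (x y : Fin n → Bool) : ham x y = 0 ↔ x = y := by
  unfold ham
  rw [Finset.card_eq_zero, Finset.filter_eq_empty_iff]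
  constructor
  · intro h; funext i; have := h (Finset.mem_univ i); simpa using this
  · intro h i _; simp [h]

def upd (x : Fin n → Bool) (i : Fin n) : Fin n → Bool := Function.update x i (!(x i))

lemma ham_upd (x : Fin n → Bool) (i : Fin n) : ham x (upd x i) = 1 := by
  unfold ham
  have hfe : (Finset.univ.filter fun j => x j ≠ upd x i j) = {i} := by
    ext j
    by_cases hj : j = i
    · subst hj; rw [Finset.mem_filter]; simp [upd, Function.update_self]
    · rw [Finset.mem_filter]; simp [hj, upd, Function.update_of_ne hj]
  rw [hfe, Finset.card_singleton]

lemma upd_inj (x : Fin n → Bool) {i j : Fin n} (h : upd x i = upd x j) : i = j := by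
  by_contra hij
  have := congrFun h i
  rw [upd, upd, Function.update_self, Function.update_of_ne hij] at this
  exact (Bool.not_ne_self (x i)) this

lemma upd_surj (x y : Fin n → Bool) (h : ham x y = 1) : ∃ i, upd x i = y := by
  unfold ham at h
  obtain ⟨j, hj⟩ := Finset.card_eq_one.mp h
  refine ⟨j, ?_⟩
  funext k
  by_cases hk : k = j
  · subst hk
    have hne : x k ≠ y k := by
      have : k ∈ ({k} : Finset (Fin n)) := mem_singleton_self k
      rw [← hj] at this
      simpa using this
    rw [upd, Function.update_self]
    cases hx : x k <;> cases hy' : y k <;> simp_all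
  · have heq : x k = y k := by
      by_contra hne
      have : k ∈ ({j} : Finset (Fin n)) := by rw [← hj]; simp [hne]
      exact hk (mem_singleton.mp this)
    rw [upd, Function.update_of_ne hk, heq]

lemma neighbors (x : Fin n → Bool) :
    (Finset.univ.filter fun y => ham x y = 1).card = n := by
  have := Finset.card_bij (s := (univ : Finset (Fin n)))
    (t := Finset.univ.filter fun y => ham x y = 1)
    (fun (i : Fin n) (_ : i ∈ (univ : Finset (Fin n))) => upd x i)
    (fun i _ => by simp [ham_upd])
    (fun i _ j _ h => upd_inj x h)
    (by
      intro y hy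
      simp only [mem_filter, mem_univ, true_and] at hy
      obtain ⟨i, hi⟩ := upd_surj x y hy
      exact ⟨i, mem_univ i, hi⟩)
  simpa using this.symm

def I (S : Finset (Fin n → Bool)) : ℕ :=
  ((S ×ˢ S).filter fun p => ham p.1 p.2 = 1).card

lemma I_as_sum (S : Finset (Fin n → Bool)) :
    I S = ∑ x ∈ S, ∑ y ∈ S, if ham x y = 1 then 1 else 0 := by
  unfold I
  rw [Finset.card_filter, Finset.sum_product]

def Sb (S : Finset (Fin (n+1) → Bool)) (b : Bool) : Finset (Fin n → Bool) :=
  Finset.univ.filter fun u => cns b u ∈ S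

lemma sum_split {M : Type*} [AddCommMonoid M] (S : Finset (Fin (n+1) → Bool))
    (f : (Fin (n+1) → Bool) → M) :
    ∑ x ∈ S, f x = (∑ u ∈ Sb S false, f (cns false u)) + ∑ u ∈ Sb S true, f (cns true u) := by
  have h1 : ∑ x ∈ S, f x = ∑ x : Fin (n+1) → Bool, if x ∈ S then f x else 0 := by
    rw [Finset.sum_ite_mem, Finset.univ_inter]
  rw [h1]
  rw [← Equiv.sum_comp (Fin.consEquiv (fun _ => Bool))
    (fun x => if x ∈ S then f x else 0)]
  rw [Fintype.sum_prod_type, Fintype.sum_bool]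
  have h2 : ∀ b : Bool, (∑ u : Fin n → Bool,
      if (Fin.consEquiv (fun _ => Bool)) (b, u) ∈ S then f ((Fin.consEquiv (fun _ => Bool)) (b, u)) else 0)
      = ∑ u ∈ Sb S b, f (cns b u) := by
    intro b
    rw [Sb, Finset.sum_filter]
    rfl
  rw [h2, h2, add_comm]

lemma card_split (S : Finset (Fin (n+1) → Bool)) :
    S.card = (Sb S false).card + (Sb S true).card := by
  have := sum_split S (fun _ => (1 : ℕ))
  simpa using this

lemma inter_count (A B : Finset (Fin n → Bool)) :
    ∑ u ∈ A, ∑ v ∈ B, (if u = v then (1:ℕ) else 0) = (A ∩ B).card := by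
  have h : ∀ u ∈ A, (∑ v ∈ B, if u = v then (1:ℕ) else 0) = if u ∈ B then 1 else 0 := by
    intro u _
    rw [Finset.sum_ite_eq B u (fun _ => (1:ℕ))]
  rw [Finset.sum_congr rfl h, Finset.sum_ite_mem, ← Finset.card_eq_sum_ones]

lemma I_rec (S : Finset (Fin (n+1) → Bool)) :
    I S = I (Sb S false) + I (Sb S true) + 2 * ((Sb S false) ∩ (Sb S true)).card := by
  rw [I_as_sum, sum_split S]
  rw [Finset.sum_congr rfl (fun u _ => sum_split S (fun y => if ham (cns false u) y = 1 then 1 else 0)),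
      Finset.sum_congr rfl (fun u _ => sum_split S (fun y => if ham (cns true u) y = 1 then 1 else 0))]
  have hsame : ∀ (b : Bool) (u v : Fin n → Bool),
      (if ham (cns b u) (cns b v) = 1 then (1:ℕ) else 0) = if ham u v = 1 then 1 else 0 := by
    intro b u v; rw [ham_cns]; simp
  have hdiff : ∀ (a b : Bool) (hab : a ≠ b) (u v : Fin n → Bool),
      (if ham (cns a u) (cns b v) = 1 then (1:ℕ) else 0) = if u = v then 1 else 0 := by
    intro a b hab u v
    rw [ham_cns, if_pos hab]
    by_cases h : u = v
    · simp [h, ham_eq_zero_iff]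
    · have : ham u v ≠ 0 := fun hz => h ((ham_eq_zero_iff u v).mp hz)
      rw [if_neg h, if_neg (by omega)]
  simp only [Finset.sum_add_distrib]
  rw [I_as_sum (Sb S false), I_as_sum (Sb S true)]
  have e1 : ∑ u ∈ Sb S false, ∑ v ∈ Sb S false, (if ham (cns false u) (cns false v) = 1 then (1:ℕ) else 0)
      = ∑ u ∈ Sb S false, ∑ v ∈ Sb S false, if ham u v = 1 then 1 else 0 := by
    exact Finset.sum_congr rfl fun u _ => Finset.sum_congr rfl fun v _ => hsame false u v
  have e2 : ∑ u ∈ Sb S true, ∑ v ∈ Sb S true, (if ham (cns true u) (cns true v) = 1 then (1:ℕ) else 0)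
      = ∑ u ∈ Sb S true, ∑ v ∈ Sb S true, if ham u v = 1 then 1 else 0 := by
    exact Finset.sum_congr rfl fun u _ => Finset.sum_congr rfl fun v _ => hsame true u v
  have e3 : ∑ u ∈ Sb S false, ∑ v ∈ Sb S true, (if ham (cns false u) (cns true v) = 1 then (1:ℕ) else 0)
      = (Sb S false ∩ Sb S true).card := by
    rw [← inter_count]
    exact Finset.sum_congr rfl fun u _ => Finset.sum_congr rfl fun v _ =>
      hdiff false true (by simp) u v
  have e4 : ∑ u ∈ Sb S true, ∑ v ∈ Sb S false, (if ham (cns true u) (cns false v) = 1 then (1:ℕ) else 0)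
      = (Sb S false ∩ Sb S true).card := by
    rw [Finset.inter_comm, ← inter_count]
    exact Finset.sum_congr rfl fun u _ => Finset.sum_congr rfl fun v _ =>
      hdiff true false (by simp) u v
  rw [e1, e2, e3, e4]
  ring


lemma rpow_two_le (t : ℝ) (h0 : 0 ≤ t) (h1 : t ≤ 1) : (2:ℝ) ^ t ≤ 1 + t := by
  have hexp : (2:ℝ) ^ t = Real.exp (t * Real.log 2) := by
    rw [Real.rpow_def_of_pos (by norm_num)]
    ring_nf
  rw [hexp]
  have hc := convexOn_exp.2 (Set.mem_univ (0:ℝ)) (Set.mem_univ (Real.log 2))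
    (show (0:ℝ) ≤ 1 - t by linarith) h0 (show (1 - t) + t = 1 by ring)
  simp only [smul_eq_mul, mul_zero, zero_add, Real.exp_zero, Real.exp_log (by norm_num : (0:ℝ) < 2)] at hc
  calc Real.exp (t * Real.log 2) ≤ (1 - t) * 1 + t * 2 := hc
    _ = 1 + t := by ring

lemma logb_one_add_ge (t : ℝ) (h0 : 0 ≤ t) (h1 : t ≤ 1) : t ≤ Real.logb 2 (1 + t) := by
  rw [Real.le_logb_iff_rpow_le (by norm_num) (by linarith)]
  exact rpow_two_le t h0 h1

/-- the key convexity-type inequality -/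
lemma key (a b : ℝ) (hb : 0 ≤ b) (hab : b ≤ a) :
    a * Real.logb 2 a + b * Real.logb 2 b + 2 * b ≤ (a + b) * Real.logb 2 (a + b) := by
  rcases eq_or_lt_of_le hb with h0 | hbpos
  · rw [← h0]
    simp
  · have hapos : 0 < a := lt_of_lt_of_le hbpos hab
    have habpos : 0 < a + b := by linarith
    -- a * (logb (a+b) - logb a) ≥ b
    have h1 : b ≤ a * (Real.logb 2 (a + b) - Real.logb 2 a) := by
      have : Real.logb 2 (a + b) - Real.logb 2 a = Real.logb 2 (1 + b / a) := by
        rw [← Real.logb_div (by positivity) (by positivity)]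
        congr 1
        field_simp
      rw [this]
      have ht := logb_one_add_ge (b / a) (by positivity) (by
        rw [div_le_one hapos]; exact hab)
      calc b = a * (b / a) := by field_simp
        _ ≤ a * Real.logb 2 (1 + b / a) := by
            exact mul_le_mul_of_nonneg_left ht (le_of_lt hapos)
    -- b * (logb (a+b) - logb b) ≥ b
    have h2 : b ≤ b * (Real.logb 2 (a + b) - Real.logb 2 b) := by
      have : Real.logb 2 (a + b) - Real.logb 2 b = Real.logb 2 ((a + b) / b) := by
        rw [← Real.logb_div (by positivity) (by positivity)]
      rw [this]
      have h2b : (2:ℝ) ≤ (a + b) / b := by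
        rw [le_div_iff₀ hbpos]; linarith
      have : (1:ℝ) ≤ Real.logb 2 ((a + b) / b) := by
        rw [Real.le_logb_iff_rpow_le (by norm_num) (by positivity), Real.rpow_one]
        exact h2b
      nlinarith
    nlinarith [h1, h2]

lemma min_key (a b : ℝ) (ha : 0 ≤ a) (hb : 0 ≤ b) :
    a * Real.logb 2 a + b * Real.logb 2 b + 2 * min a b ≤ (a + b) * Real.logb 2 (a + b) := by
  rcases le_total b a with h | h
  · rw [min_eq_right h]; exact key a b hb h
  · rw [min_eq_left h, show a + b = b + a from add_comm a b]
    have := key b a ha h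
    linarith [this]

lemma I_le : ∀ (n : ℕ) (S : Finset (Fin n → Bool)),
    (I S : ℝ) ≤ S.card * Real.logb 2 S.card := by
  intro n
  induction n with
  | zero =>
    intro S
    have hI : I S = 0 := by
      unfold I ham
      rw [Finset.card_eq_zero, Finset.filter_eq_empty_iff]
      intro p _
      simp
    rw [hI]
    have hcard : S.card ≤ 1 := by
      have := Finset.card_le_univ S
      simpa using this
    interval_cases h : S.card <;> simp
  | succ n ih =>
    intro S
    have hI := I_rec S
    have hc := card_split S
    set A := Sb S false with hA
    set B := Sb S true with hB
    have hmin : ((A ∩ B).card : ℝ) ≤ min (A.card : ℝ) (B.card : ℝ) := by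
      apply le_min
      · exact_mod_cast Finset.card_le_card Finset.inter_subset_left
      · exact_mod_cast Finset.card_le_card Finset.inter_subset_right
    have h1 := ih A
    have h2 := ih B
    have hkey := min_key (A.card : ℝ) (B.card : ℝ) (by positivity) (by positivity)
    have hIcast : (I S : ℝ) = (I A : ℝ) + (I B : ℝ) + 2 * ((A ∩ B).card : ℝ) := by
      exact_mod_cast congrArg (Nat.cast : ℕ → ℝ) hI
    have hccast : (S.card : ℝ) = (A.card : ℝ) + (B.card : ℝ) := by
      exact_mod_cast congrArg (Nat.cast : ℕ → ℝ) hc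
    rw [hIcast, hccast]
    linarith

lemma boundary_eq (n : ℕ) (S : Finset (Fin n → Bool)) :
    I S + ((S ×ˢ Sᶜ).filter fun p => ham p.1 p.2 = 1).card = S.card * n := by
  have hB : ((S ×ˢ Sᶜ).filter fun p => ham p.1 p.2 = 1).card
      = ∑ x ∈ S, (Sᶜ.filter fun y => ham x y = 1).card := by
    rw [Finset.card_filter, Finset.sum_product]
    exact Finset.sum_congr rfl fun x _ => (Finset.card_filter _ _).symm
  have hIS : I S = ∑ x ∈ S, (S.filter fun y => ham x y = 1).card := by
    rw [I_as_sum]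
    exact Finset.sum_congr rfl fun x _ => (Finset.card_filter _ _).symm
  rw [hB, hIS, ← Finset.sum_add_distrib]
  have : ∀ x ∈ S, (S.filter fun y => ham x y = 1).card
      + (Sᶜ.filter fun y => ham x y = 1).card = n := by
    intro x _
    rw [← Finset.card_union_of_disjoint
        (Finset.disjoint_filter_filter (disjoint_compl_right)),
      ← Finset.filter_union, Finset.union_compl]
    exact neighbors x
  rw [Finset.sum_congr rfl this, Finset.sum_const, smul_eq_mul]

end HEI

/-- Edge isoperimetric inequality for the hypercube: for any set `S` of vertices of
the `n`-dimensional hypercube `Q_n` (vertices are binary strings of length `n`,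
adjacent iff they differ in exactly one coordinate), the number of edges with
exactly one endpoint in `S` is at least `|S| · (n - log₂ |S|)`. -/
theorem hypercube_edge_isoperimetric (n : ℕ) (S : Finset (Fin n → Bool)) :
    (S.card : ℝ) * (n - Real.logb 2 S.card) ≤
      ((S ×ˢ Sᶜ).filter
        (fun p => (Finset.univ.filter fun i => p.1 i ≠ p.2 i).card = 1)).card := by
  have hb := HEI.boundary_eq n S
  have hI := HEI.I_le n S
  have hcast : ((HEI.I S : ℝ)) + (((S ×ˢ Sᶜ).filter fun p => HEI.ham p.1 p.2 = 1).card : ℝ)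
      = S.card * n := by exact_mod_cast congrArg (Nat.cast : ℕ → ℝ) hb
  have hfinal : (S.card : ℝ) * (n - Real.logb 2 S.card) ≤
      (((S ×ˢ Sᶜ).filter fun p => HEI.ham p.1 p.2 = 1).card : ℝ) := by nlinarith [hI, hcast]
  exact hfinal
end

section
/- Let T_1, ..., T_m be independent, identically distributed random variables, each equal to the hitting time of state n for the Markov chain on {0,...,n} that advances with probability 1/4 each step. For any fixed ε > 0 and sufficiently large n (with m ≤ n), E[max_i T_i] ≤ (4+5ε)n. -/
open MeasureTheory ProbabilityTheory Real

lemma nat_le_blocks {x t0 b : ℕ} (hb : 0 < b) (f : ℕ → ENNReal)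
    (hf : ∀ j : ℕ, t0 + b * j < x → 1 ≤ f j) :
    (x : ENNReal) ≤ (t0 : ENNReal) + (b : ENNReal) * ∑' j, f j := by
  rcases le_or_gt x t0 with h | h
  · exact le_trans (Nat.cast_le.mpr h) le_self_add
  · set a := x - t0 with ha
    set k := (a - 1) / b + 1 with hk
    have hP := Nat.div_add_mod (a - 1) b
    have hPm : (a - 1) % b < b := Nat.mod_lt _ hb
    have hbk : b * k = b * ((a-1)/b) + b := by rw [hk, Nat.mul_succ]
    have hxk : x ≤ t0 + b * k := by omega
    have hjk : ∀ j, j < k → t0 + b * j < x := by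
      intro j hj
      have h1 : b * j ≤ b * ((a-1)/b) := Nat.mul_le_mul_left b (by omega)
      omega
    have hsum : (k : ENNReal) ≤ ∑' j, f j := by
      calc (k : ENNReal) = ∑ _j ∈ Finset.range k, 1 := by simp
      _ ≤ ∑ j ∈ Finset.range k, f j :=
        Finset.sum_le_sum fun j hj => hf j (hjk j (Finset.mem_range.mp hj))
      _ ≤ ∑' j, f j := ENNReal.sum_le_tsum _
    calc (x : ENNReal) ≤ ((t0 + b * k : ℕ) : ENNReal) := Nat.cast_le.mpr hxk
    _ = (t0 : ENNReal) + (b : ENNReal) * (k : ENNReal) := by push_cast; ring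
    _ ≤ (t0 : ENNReal) + (b : ENNReal) * ∑' j, f j := by gcongr

lemma exp_neg_le_quad {x : ℝ} (hx : 0 ≤ x) : Real.exp (-x) ≤ 1 - x + x ^ 2 := by
  have e1 := Real.add_one_le_exp x
  have e2 : Real.exp (-x) * Real.exp x = 1 := by rw [← Real.exp_add]; simp
  have e3 : 0 < Real.exp (-x) := Real.exp_pos _
  have e4 : Real.exp (-x) * (1 + x) ≤ 1 := by nlinarith
  nlinarith [pow_nonneg hx 3, sq_nonneg x]

lemma bernoulli_mgf {Ω : Type} [MeasureSpace Ω] [IsProbabilityMeasure (ℙ : Measure Ω)]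
    (W : Ω → Bool) (hWm : Measurable W) (hWp : ℙ {ω | W ω = true} = ENNReal.ofReal (1 / 4))
    (l : ℝ) :
    mgf (fun ω => if W ω = true then (1:ℝ) else 0) ℙ (-l)
      = 3/4 + Real.exp (-l) / 4 := by
  have hA : MeasurableSet {ω | W ω = true} := hWm (measurableSet_singleton true)
  have hfun : (fun ω => Real.exp (-l * (if W ω = true then (1:ℝ) else 0)))
      = fun ω => Set.indicator {ω | W ω = true} (fun _ => Real.exp (-l) - 1) ω + 1 := by
    funext ω
    by_cases h : W ω = true
    · simp [h, Set.indicator_of_mem, Set.mem_setOf_eq]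
    · simp [h, Set.indicator_of_notMem, Set.mem_setOf_eq]
  rw [mgf, hfun, integral_add ((integrable_const _).indicator hA) (integrable_const 1),
    integral_indicator_const _ hA, integral_const, measureReal_def, hWp]
  simp [ENNReal.toReal_ofReal]
  ring

lemma chernoff_window {Ω : Type} [MeasureSpace Ω] [IsProbabilityMeasure (ℙ : Measure Ω)]
    {ι : Type} (Y : ι → Ω → Bool) (hYm : ∀ q, Measurable (Y q))
    (hYi : iIndepFun Y ℙ)
    (hYp : ∀ q, ℙ {ω | Y q ω = true} = ENNReal.ofReal (1 / 4))
    (F : Finset ι) (n : ℕ) {l : ℝ} (hl : 0 ≤ l) :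
    (ℙ {ω | ((F.filter (fun q => Y q ω = true)).card) < n}).toReal
      ≤ Real.exp (l * n) * Real.exp (-(l * (1 - l)) / 4) ^ F.card := by
  classical
  set Z : ι → Ω → ℝ := fun q ω => if Y q ω = true then 1 else 0 with hZ
  have hZm : ∀ q, Measurable (Z q) := fun q =>
    Measurable.ite (hYm q (measurableSet_singleton true)) measurable_const measurable_const
  have hZi : iIndepFun Z ℙ :=
    hYi.comp (fun _ (b : Bool) => if b = true then (1:ℝ) else 0) (fun _ => measurable_from_top)
  set S : Ω → ℝ := fun ω => ∑ q ∈ F, Z q ω with hS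
  have hSm : Measurable S := Finset.measurable_sum _ fun q _ => hZm q
  have hS0 : ∀ ω, 0 ≤ S ω := fun ω => Finset.sum_nonneg fun q _ => by
    simp only [hZ]; split <;> norm_num
  have hcard : ∀ ω, S ω = ((F.filter fun q => Y q ω = true).card : ℝ) := by
    intro ω
    rw [Finset.card_filter]
    push_cast
    rfl
  have hsub : {ω | (F.filter fun q => Y q ω = true).card < n} ⊆ {ω | S ω ≤ (n : ℝ)} := by
    intro ω hω
    simp only [Set.mem_setOf_eq] at hω ⊢
    rw [hcard ω]
    exact_mod_cast Nat.le_of_lt hω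
  have hint : Integrable (fun ω => Real.exp (-l * S ω)) ℙ := by
    refine Integrable.mono' (integrable_const 1)
      ((hSm.const_mul (-l)).exp).aestronglyMeasurable (Filter.Eventually.of_forall fun ω => ?_)
    rw [Real.norm_eq_abs, abs_of_pos (Real.exp_pos _)]
    rw [Real.exp_le_one_iff]
    have := hS0 ω
    nlinarith
  have key := measure_le_le_exp_mul_mgf (μ := ℙ) (X := S) (n : ℝ) (neg_nonpos.mpr hl) hint
  have hmono : (ℙ {ω | ((F.filter (fun q => Y q ω = true)).card) < n}).toReal
      ≤ (ℙ {ω | S ω ≤ (n : ℝ)}).toReal :=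
    ENNReal.toReal_mono (measure_ne_top _ _) (measure_mono hsub)
  have hmgf : mgf S ℙ (-l) = (3/4 + Real.exp (-l) / 4) ^ F.card := by
    have hSsum : S = ∑ q ∈ F, Z q := by funext ω; rw [hS]; simp [Finset.sum_apply]
    rw [hSsum, hZi.mgf_sum hZm F]
    rw [Finset.prod_congr rfl fun q _ => bernoulli_mgf (Y q) (hYm q) (hYp q) l,
      Finset.prod_const]
  have hstep : 3/4 + Real.exp (-l) / 4 ≤ Real.exp (-(l * (1 - l)) / 4) := by
    have h1 := exp_neg_le_quad hl
    have h2 := Real.add_one_le_exp (-(l * (1 - l)) / 4)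
    nlinarith
  calc (ℙ {ω | ((F.filter (fun q => Y q ω = true)).card) < n}).toReal
      ≤ Real.exp (-(-l) * n) * mgf S ℙ (-l) := le_trans hmono key
    _ = Real.exp (l * n) * (3/4 + Real.exp (-l) / 4) ^ F.card := by rw [hmgf, neg_neg]
    _ ≤ Real.exp (l * n) * Real.exp (-(l * (1 - l)) / 4) ^ F.card := by
        gcongr


set_option maxHeartbeats 1000000 in
/-- Let `T_1, …, T_m` be i.i.d. copies of the hitting time of state `n` for the
Markov chain on `{0,…,n}` that advances with probability `1/4` each step
(realized by independent Bernoulli(1/4) steps `Y (i, s)`).  For fixed `ε > 0`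
and all sufficiently large `n`, if `m ≤ n` then `E[max_i T_i] ≤ (4+5ε)n`. -/
theorem expected_max_hitting_time (ε : ℝ) (hε : 0 < ε) :
    ∃ N₀ : ℕ, ∀ n : ℕ, N₀ ≤ n → ∀ m : ℕ, m ≤ n →
      ∀ {Ω : Type} [MeasureSpace Ω] [IsProbabilityMeasure (ℙ : Measure Ω)]
        (Y : Fin m × ℕ → Ω → Bool),
        (∀ q, Measurable (Y q)) →
        iIndepFun Y ℙ →
        (∀ q, ℙ {ω | Y q ω = true} = ENNReal.ofReal (1 / 4)) →
        ∀ T : Fin m → Ω → ℕ,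
          (∀ i ω, T i ω = sInf {t | n ≤
            ((Finset.range t).filter (fun s => Y (i, s) ω = true)).card}) →
          ∫ ω, ((Finset.univ.sup (fun i => T i ω) : ℕ) : ℝ) ≤ (4 + 5 * ε) * n := by
  classical
  have h1ε : (0:ℝ) < 1 + ε := by linarith
  set l : ℝ := ε / (2 * (1 + ε)) with hl_def
  have hl0 : 0 < l := div_pos hε (by positivity)
  have hl1 : l < 1 := by
    rw [hl_def, div_lt_one (by positivity)]; linarith
  have hl2 : l * (1 + ε) = ε / 2 := by
    rw [hl_def]; field_simp
  set c : ℝ := l * (1 - l) / 4 with hc_def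
  have hc0 : 0 < c := by
    rw [hc_def]; have : 0 < 1 - l := by linarith
    positivity
  set a : ℝ := l * ε / 2 with ha_def
  have ha0 : 0 < a := by rw [ha_def]; positivity
  clear_value l c a
  refine ⟨⌈(432:ℝ)/a^3⌉₊ + ⌈1/(8*c)⌉₊ + ⌈2/ε⌉₊ + 1, ?_⟩
  intro n hn m hm Ω _ _ Y hYm hYi hYp T hT
  have hn1 : 1 ≤ n := by omega
  have hnn : (0:ℝ) < n := by exact_mod_cast hn1
  have hnR3 : (432:ℝ)/a^3 ≤ n := Nat.ceil_le.mp (by omega)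
  have hnR2 : 1/(8*c) ≤ (n:ℝ) := Nat.ceil_le.mp (by omega)
  have hnR4 : 2/ε ≤ (n:ℝ) := Nat.ceil_le.mp (by omega)
  have hcond4 : 2 ≤ ε * n := by
    rw [div_le_iff₀ hε] at hnR4; linarith
  -- condition 2 : geometric ratio at most 1/2
  have hcond2 : Real.exp (-c) ^ (8*n) ≤ 1/2 := by
    have h8 : (1:ℝ) ≤ 8*c*n := by
      rw [div_le_iff₀ (by positivity)] at hnR2; linarith
    have hexp : (2:ℝ) ≤ Real.exp (8*c*n) := by
      have := Real.add_one_le_exp (8*c*n); linarith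
    have : Real.exp (-c) ^ (8*n) = Real.exp ((8*n : ℕ) * (-c)) := (Real.exp_nat_mul _ _).symm
    rw [this]
    have heq : ((8*n : ℕ) : ℝ) * (-c) = -(8*c*n) := by push_cast; ring
    rw [heq, Real.exp_neg]
    calc (Real.exp (8*c*n))⁻¹ ≤ (2:ℝ)⁻¹ := inv_anti₀ two_pos hexp
      _ = 1/2 := by norm_num
  -- condition 3
  have hcond3 : 16 * (n:ℝ)^2 * Real.exp (-(a*n)) ≤ 1 := by
    have hx0 : (0:ℝ) ≤ a*n/3 := by positivity
    have hcube : Real.exp (a*n) = Real.exp (a*n/3) ^ 3 := by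
      rw [← Real.exp_nat_mul]; push_cast; ring_nf
    have hge : (a*n/3)^3 ≤ Real.exp (a*n) := by
      rw [hcube]
      exact pow_le_pow_left₀ hx0 (by have := Real.add_one_le_exp (a*n/3); linarith) 3
    have h432 : 432 ≤ a^3 * n := by
      rw [div_le_iff₀ (by positivity)] at hnR3; linarith
    have hpos : (0:ℝ) < (a*n/3)^3 := by
      have : (0:ℝ) < a*n/3 := by positivity
      positivity
    have h16 : 16 * (n:ℝ)^2 ≤ Real.exp (a*n) := by
      refine le_trans ?_ hge
      nlinarith [sq_nonneg ((n:ℝ))]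
    calc 16 * (n:ℝ)^2 * Real.exp (-(a*n)) ≤ Real.exp (a*n) * Real.exp (-(a*n)) := by
          gcongr
      _ = 1 := by rw [← Real.exp_add]; simp
  -- window length
  set t0 : ℕ := 4*n + ⌈4*ε*(n:ℝ)⌉₊ with ht0_def
  have ht0l : (4+4*ε)*n ≤ (t0:ℝ) := by
    have := Nat.le_ceil (4*ε*(n:ℝ))
    push_cast [ht0_def]
    linarith
  have ht0u : (t0:ℝ) ≤ (4+4*ε)*n + 1 := by
    have := Nat.ceil_lt_add_one (show (0:ℝ) ≤ 4*ε*n by positivity)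
    push_cast [ht0_def]
    linarith
  clear_value t0
  -- per-window probability bound
  have hwin : ∀ (cw : ℕ) (i : Fin m),
      ℙ {ω | ((Finset.range cw).filter (fun s => Y (i,s) ω = true)).card < n}
        ≤ ENNReal.ofReal (Real.exp (l*n) * Real.exp (-(l*(1-l))/4) ^ cw) := by
    intro cw i
    set emb : ℕ ↪ Fin m × ℕ := ⟨fun s => (i, s), fun a b h => by simpa using h⟩ with hemb
    set F : Finset (Fin m × ℕ) := (Finset.range cw).map emb with hF
    have hcardF : F.card = cw := by simp [hF]
    have hset : {ω | ((Finset.range cw).filter (fun s => Y (i,s) ω = true)).card < n}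
        = {ω | (F.filter (fun q => Y q ω = true)).card < n} := by
      ext ω
      simp only [Set.mem_setOf_eq, hF, Finset.filter_map, Finset.card_map]
      rfl
    have hch := chernoff_window Y hYm hYi hYp F n hl0.le
    rw [hcardF] at hch
    rw [hset]
    calc ℙ {ω | (F.filter (fun q => Y q ω = true)).card < n}
        = ENNReal.ofReal ((ℙ {ω | (F.filter (fun q => Y q ω = true)).card < n}).toReal) :=
          (ENNReal.ofReal_toReal (measure_ne_top _ _)).symm
      _ ≤ ENNReal.ofReal (Real.exp (l*n) * Real.exp (-(l*(1-l))/4) ^ cw) :=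
          ENNReal.ofReal_le_ofReal hch
  -- events
  set ρ : ℝ := Real.exp (-(l*(1-l))/4) with hρ_def
  have hρc : ρ = Real.exp (-c) := by rw [hρ_def, hc_def]; ring_nf
  have hρ0 : 0 < ρ := Real.exp_pos _
  have hρ1 : ρ < 1 := by
    rw [hρc]; exact Real.exp_lt_one_iff.mpr (by linarith)
  set r : ℝ := ρ ^ (8*n) with hr_def
  have hr0 : 0 ≤ r := by positivity
  have hr12 : r ≤ 1/2 := by rw [hr_def, hρc]; exact hcond2
  clear_value ρ r
  set E : ℕ → Set Ω := fun j => ⋃ i : Fin m,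
    {ω | ((Finset.range (t0 + 8*n*j)).filter (fun s => Y (i,s) ω = true)).card < n} with hE_def
  have hEmeas : ∀ j, MeasurableSet (E j) := by
    intro j
    refine MeasurableSet.iUnion fun i => ?_
    have hfm : Measurable (fun ω =>
        ((Finset.range (t0 + 8*n*j)).filter (fun s => Y (i,s) ω = true)).card) := by
      have : (fun ω => ((Finset.range (t0 + 8*n*j)).filter (fun s => Y (i,s) ω = true)).card)
          = fun ω => ∑ s ∈ Finset.range (t0 + 8*n*j), if Y (i,s) ω = true then 1 else 0 :=
        funext fun ω => Finset.card_filter _ _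
      rw [this]
      exact Finset.measurable_sum _ fun s _ =>
        Measurable.ite (hYm (i,s) (measurableSet_singleton true)) measurable_const
          measurable_const
    exact hfm (measurableSet_Iio (a := n))
  have hEP : ∀ j, ℙ (E j) ≤ (m : ENNReal) *
      ENNReal.ofReal ((Real.exp (l*n) * ρ ^ t0) * r ^ j) := by
    intro j
    have hexp : Real.exp (l*n) * ρ ^ (t0 + 8*n*j) = (Real.exp (l*n) * ρ ^ t0) * r ^ j := by
      rw [hr_def, pow_add, ← pow_mul]
      ring
    calc ℙ (E j) ≤ ∑' i : Fin m, ℙ {ω |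
          ((Finset.range (t0 + 8*n*j)).filter (fun s => Y (i,s) ω = true)).card < n} :=
        measure_iUnion_le _
      _ ≤ ∑' _i : Fin m, ENNReal.ofReal ((Real.exp (l*n) * ρ ^ t0) * r ^ j) := by
          refine ENNReal.tsum_le_tsum fun i => ?_
          rw [← hexp]
          exact hwin (t0 + 8*n*j) i
      _ = (m : ENNReal) * ENNReal.ofReal ((Real.exp (l*n) * ρ ^ t0) * r ^ j) := by
          rw [tsum_fintype]
          simp [Finset.sum_const, Finset.card_univ]
  -- pointwise bound
  have hb8 : 0 < 8*n := by omega
  have hpt : ∀ ω : Ω, ((Finset.univ.sup (fun i => T i ω) : ℕ) : ENNReal)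
      ≤ (t0 : ENNReal) + ((8*n : ℕ) : ENNReal) * ∑' j, (E j).indicator 1 ω := by
    intro ω
    refine nat_le_blocks hb8 _ fun j hj => ?_
    obtain ⟨i, -, hi⟩ := Finset.lt_sup_iff.mp hj
    have hmem : ω ∈ E j := by
      refine Set.mem_iUnion.mpr ⟨i, ?_⟩
      simp only [Set.mem_setOf_eq]
      by_contra hcon
      push_neg at hcon
      have : T i ω ≤ t0 + 8*n*j := by
        rw [hT i ω]
        exact Nat.sInf_le hcon
      omega
    simp [Set.indicator_of_mem hmem]
  clear_value E
  -- lintegral bound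
  set p0 : ℝ := Real.exp (l*(n:ℝ)) * ρ ^ t0 with hp0_def
  have hp00 : 0 ≤ p0 := by positivity
  have hsummable : Summable (fun j : ℕ => p0 * r ^ j) :=
    (summable_geometric_of_lt_one hr0 (by linarith)).mul_left p0
  clear_value p0
  have hlint : ∫⁻ ω, ((Finset.univ.sup (fun i => T i ω) : ℕ) : ENNReal) ∂ℙ
      ≤ ENNReal.ofReal ((4 + 5*ε) * n) := by
    calc ∫⁻ ω, ((Finset.univ.sup (fun i => T i ω) : ℕ) : ENNReal) ∂ℙ
        ≤ ∫⁻ ω, ((t0 : ENNReal) + ((8*n : ℕ) : ENNReal) * ∑' j, (E j).indicator 1 ω) ∂ℙ :=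
          lintegral_mono hpt
      _ = (t0 : ENNReal) + ((8*n : ℕ) : ENNReal) * ∑' j, ℙ (E j) := by
          rw [lintegral_add_left measurable_const,
            lintegral_const_mul' _ _ (ENNReal.natCast_ne_top _), lintegral_const,
            measure_univ, mul_one,
            lintegral_tsum fun j => (measurable_one.indicator (hEmeas j)).aemeasurable]
          congr 1
          congr 1
          exact tsum_congr fun j => lintegral_indicator_one (hEmeas j)
      _ ≤ (t0 : ENNReal) + ((8*n : ℕ) : ENNReal) *
            ∑' j, ((m : ENNReal) * ENNReal.ofReal (p0 * r ^ j)) := by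
          gcongr with j
          exact hEP j
      _ = (t0 : ENNReal) + ((8*n : ℕ) : ENNReal) *
            ((m : ENNReal) * ENNReal.ofReal (p0 * (1 - r)⁻¹)) := by
          rw [ENNReal.tsum_mul_left]
          congr 2
          rw [← ENNReal.ofReal_tsum_of_nonneg (fun j => by positivity) hsummable]
          congr 1
          rw [tsum_mul_left, tsum_geometric_of_lt_one hr0 (by linarith)]
      _ = ENNReal.ofReal (((t0:ℕ):ℝ) + ((8*n:ℕ):ℝ) * ((m:ℝ) * (p0 * (1 - r)⁻¹))) := by
          have h1 : (0:ℝ) ≤ p0 * (1 - r)⁻¹ := by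
            have h2 : (0:ℝ) ≤ (1 - r)⁻¹ := by
              have : (0:ℝ) < 1 - r := by linarith
              positivity
            exact mul_nonneg hp00 h2
          rw [ENNReal.ofReal_add (Nat.cast_nonneg _)
              (mul_nonneg (Nat.cast_nonneg _) (mul_nonneg (Nat.cast_nonneg _) h1)),
            ENNReal.ofReal_mul (Nat.cast_nonneg _), ENNReal.ofReal_mul (Nat.cast_nonneg _),
            ENNReal.ofReal_natCast, ENNReal.ofReal_natCast, ENNReal.ofReal_natCast]
      _ ≤ ENNReal.ofReal ((4 + 5*ε) * n) := by
          refine ENNReal.ofReal_le_ofReal ?_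
          -- real arithmetic
          have hinv : (1 - r)⁻¹ ≤ 2 := by
            have h2 : (1:ℝ)/2 ≤ 1 - r := by linarith
            calc (1 - r)⁻¹ ≤ ((1:ℝ)/2)⁻¹ := by
                  exact inv_anti₀ (by norm_num) h2
              _ = 2 := by norm_num
          have hp0e : p0 ≤ Real.exp (-(a*n)) := by
            rw [hp0_def, hρc, ← Real.exp_nat_mul, ← Real.exp_add]
            refine Real.exp_le_exp.mpr ?_
            have hct0 : c * ((4+4*ε)*n) ≤ c * t0 := by
              exact mul_le_mul_of_nonneg_left ht0l hc0.le
            have hkey : l * (n:ℝ) - c * ((4+4*ε)*n) = -(a*n) := by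
              rw [hc_def, ha_def]
              linear_combination (n:ℝ)*l*hl2
            have e : (t0:ℝ) * -c = -(c * (t0:ℝ)) := by ring
            rw [e]
            linarith only [hct0, hkey]
          have hmain : (8*n:ℝ) * ((m:ℝ) * (p0 * (1 - r)⁻¹)) ≤ 1 := by
            have hmn : (m:ℝ) ≤ n := by exact_mod_cast hm
            have hm0 : (0:ℝ) ≤ m := Nat.cast_nonneg m
            calc (8*n:ℝ) * ((m:ℝ) * (p0 * (1 - r)⁻¹))
                ≤ (8*n:ℝ) * ((n:ℝ) * (Real.exp (-(a*n)) * 2)) := by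
                  have hinv0 : (0:ℝ) ≤ (1 - r)⁻¹ := by
                    have : (0:ℝ) < 1 - r := by linarith
                    positivity
                  have h1 : p0 * (1 - r)⁻¹ ≤ Real.exp (-(a*n)) * 2 :=
                    mul_le_mul hp0e hinv hinv0 (Real.exp_pos _).le
                  have h2 : (m:ℝ) * (p0 * (1 - r)⁻¹) ≤ (n:ℝ) * (Real.exp (-(a*n)) * 2) :=
                    mul_le_mul hmn h1 (by positivity) (by positivity)
                  exact mul_le_mul_of_nonneg_left h2 (by positivity)
              _ = 16 * (n:ℝ)^2 * Real.exp (-(a*n)) := by ring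
              _ ≤ 1 := hcond3
          push_cast
          linarith only [hmain, ht0u, hcond4, hε, hnn]
  -- from lintegral to integral
  by_cases hInt : Integrable (fun ω => ((Finset.univ.sup (fun i => T i ω) : ℕ) : ℝ)) ℙ
  · rw [integral_eq_lintegral_of_nonneg_ae (Filter.Eventually.of_forall fun ω => by positivity)
      hInt.aestronglyMeasurable]
    refine ENNReal.toReal_le_of_le_ofReal (by positivity) ?_
    calc ∫⁻ ω, ENNReal.ofReal ((Finset.univ.sup (fun i => T i ω) : ℕ) : ℝ) ∂ℙ
        = ∫⁻ ω, ((Finset.univ.sup (fun i => T i ω) : ℕ) : ENNReal) ∂ℙ := by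
          congr 1
          funext ω
          exact ENNReal.ofReal_natCast _
      _ ≤ ENNReal.ofReal ((4 + 5*ε) * n) := hlint
  · rw [integral_undef hInt]
    positivity
end
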